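/- Let R = ℂ[x₁,…,x_k] be the polynomial ring in k ≥ 1 variables. For each nonempty subset S ⊆ {1,…,k} let I_S denote the ideal of R generated by {x_i : i ∈ S}. Then the complex of R-modules 0 → R/(x₁⋯x_k) → ⊕_{|S|=1} R/I_S → ⊕_{|S|=2} R/I_S → ⋯ → R/I_{{1,…,k}} → 0 is exact, where the first map has components the canonical quotient projections R/(x₁⋯x_k) → R/(x_i), and for 1 ≤ j < k the map ⊕_{|S|=j} R/I_S → ⊕_{|S′|=j+1} R/I_{S′} has (S,S′)-component equal to (−1)^p times the canonical projection R/I_S → R/I_{S′} when S ⊂ S′ (with p the position, in increasing order, of the unique element of S′∖S within S′) and equal to zero otherwise. -/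

import Mathlib

open MvPolynomial

noncomputable section

/-- The polynomial ring `R = ℂ[x₁,…,x_k]`. -/
abbrev PolyC (k : ℕ) := MvPolynomial (Fin k) ℂ

/-- The ideal `I_S` of `R` generated by the variables `x_i` with `i ∈ S`. -/
def idealOf (k : ℕ) (S : Finset (Fin k)) : Ideal (PolyC k) :=
  Ideal.span ((fun i => (X i : PolyC k)) '' (S : Set (Fin k)))

/-- The principal ideal generated by `x₁⋯x_k`. -/
def prodIdeal (k : ℕ) : Ideal (PolyC k) :=
  Ideal.span {∏ i : Fin k, (X i : PolyC k)}

lemma prod_mem_idealOf {k : ℕ} {S : Finset (Fin k)} (hS : S.Nonempty) :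
    (∏ i : Fin k, (X i : PolyC k)) ∈ idealOf k S := by
  obtain ⟨s, hs⟩ := hS
  have hXs : (X s : PolyC k) ∈ idealOf k S :=
    Ideal.subset_span ⟨s, by exact_mod_cast hs, rfl⟩
  rw [← Finset.mul_prod_erase Finset.univ (fun i => (X i : PolyC k)) (Finset.mem_univ s)]
  exact Ideal.mul_mem_right _ _ hXs

/-- For `a ∈ S′∖S` (a singleton when `S ⊂ S′` with `|S′| = |S| + 1`), the sum of the
positions, in increasing order, of the elements of `S′∖S` within `S′`. -/
def newElemPos {k : ℕ} (S S' : Finset (Fin k)) : ℕ :=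
  ∑ a ∈ S' \ S, (S'.filter fun b => b ≤ a).card

/-- The `(S,S′)`-component of the differential: `(−1)^p` times the canonical projection
`R/I_S → R/I_{S′}` when `S ⊆ S′`, and zero otherwise. -/
def compMap {k : ℕ} (S S' : Finset (Fin k)) :
    (PolyC k ⧸ idealOf k S) → (PolyC k ⧸ idealOf k S') :=
  if h : S ⊆ S' then
    fun x => (-1 : PolyC k ⧸ idealOf k S') ^ newElemPos S S' *
      Ideal.Quotient.factor (S := idealOf k S) (T := idealOf k S')
        (Ideal.span_mono (Set.image_mono (Finset.coe_subset.mpr h))) x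
  else fun _ => 0

/-- The `j`-th term `⊕_{|S| = j} R/I_S` of the complex. -/
abbrev Cmod (k j : ℕ) :=
  ∀ S : {S : Finset (Fin k) // S.card = j}, PolyC k ⧸ idealOf k S.1

/-- The differential `⊕_{|S| = j} R/I_S → ⊕_{|S′| = j+1} R/I_{S′}` with components
`compMap`. -/
def dstep (k j : ℕ) : Cmod k j → Cmod k (j + 1) := fun c S' =>
  ∑ S : {S : Finset (Fin k) // S.card = j}, compMap S.1 S'.1 (c S)

/-- The first map `R/(x₁⋯x_k) → ⊕_{|S| = 1} R/I_S`, with components the canonical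
quotient projections. -/
def dzero (k : ℕ) : (PolyC k ⧸ prodIdeal k) → Cmod k 1 := fun x S =>
  Ideal.Quotient.factor (S := prodIdeal k) (T := idealOf k S.1)
    (by
      rw [prodIdeal, Ideal.span_le, Set.singleton_subset_iff]
      exact prod_mem_idealOf (Finset.card_pos.mp (by rw [S.2]; omega))) x

section Aux

open Finset

variable {k : ℕ}

/-- The monomial `μ` avoids all variables of `S`. -/
def Avoids (S : Finset (Fin k)) (μ : Fin k →₀ ℕ) : Prop := ∀ i ∈ S, μ i = 0

instance (S : Finset (Fin k)) : DecidablePred (Avoids S) :=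
  fun μ => decidable_of_iff (∀ i ∈ S, μ i = 0) Iff.rfl

/-- Some variable is absent from the monomial `μ`. -/
def NotFull (μ : Fin k →₀ ℕ) : Prop := ∃ i, μ i = 0

instance : DecidablePred (NotFull (k := k)) :=
  fun μ => decidable_of_iff (∃ i, μ i = 0) Iff.rfl

/-- Keep only the monomials satisfying `P`. -/
def fsel (P : (Fin k →₀ ℕ) → Prop) [DecidablePred P] (p : PolyC k) : PolyC k :=
  AddMonoidAlgebra.ofCoeff (Finsupp.filter P (AddMonoidAlgebra.coeff p))

/-- Keep only the monomials avoiding `S`. -/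
def flt (S : Finset (Fin k)) (p : PolyC k) : PolyC k := fsel (Avoids S) p

/-- Keep only the monomials not divisible by `x₁⋯x_k`. -/
def flt0 (p : PolyC k) : PolyC k := fsel NotFull p

lemma coeff_fsel (P : (Fin k →₀ ℕ) → Prop) [DecidablePred P] (p : PolyC k) (μ : Fin k →₀ ℕ) :
    coeff μ (fsel P p) = if P μ then coeff μ p else 0 := by
  split_ifs with h
  · exact Finsupp.filter_apply_pos _ _ h
  · exact Finsupp.filter_apply_neg _ _ h

lemma fsel_eq_zero_iff {P : (Fin k →₀ ℕ) → Prop} [DecidablePred P] {p : PolyC k} :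
    fsel P p = 0 ↔ ∀ μ, P μ → coeff μ p = 0 := by
  constructor
  · intro h μ hμ
    have h2 := congrArg (coeff μ) h
    rwa [coeff_fsel, if_pos hμ, coeff_zero] at h2
  · intro h
    apply MvPolynomial.ext
    intro μ
    rw [coeff_fsel, coeff_zero]
    split_ifs with hμ
    · exact h μ hμ
    · rfl

lemma flt_eq_zero_iff {S : Finset (Fin k)} {p : PolyC k} :
    flt S p = 0 ↔ ∀ μ, Avoids S μ → coeff μ p = 0 := fsel_eq_zero_iff

lemma sub_fsel_mem {P : (Fin k →₀ ℕ) → Prop} [DecidablePred P] (p : PolyC k) :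
    p - fsel P p = fsel (fun μ => ¬ P μ) p := by
  apply MvPolynomial.ext
  intro μ
  simp only [coeff_sub, coeff_fsel]
  by_cases h : P μ
  · rw [if_pos h, if_neg (not_not_intro h), sub_self]
  · rw [if_neg h, if_pos h, sub_zero]

lemma X_mem_idealOf {S : Finset (Fin k)} {i : Fin k} (hi : i ∈ S) :
    (X i : PolyC k) ∈ idealOf k S :=
  Ideal.subset_span ⟨i, by exact_mod_cast hi, rfl⟩

lemma monomial_mem_idealOf {S : Finset (Fin k)} {μ : Fin k →₀ ℕ}
    (h : ¬ Avoids S μ) (r : ℂ) : (monomial μ r : PolyC k) ∈ idealOf k S := by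
  unfold Avoids at h
  push_neg at h
  obtain ⟨i, hiS, hiμ⟩ := h
  have hX : (X i : PolyC k) = monomial (Finsupp.single i 1) 1 := rfl
  have key : (monomial μ r : PolyC k) = X i * monomial (μ - Finsupp.single i 1) r := by
    rw [hX, monomial_mul, one_mul,
      add_tsub_cancel_of_le (Finsupp.single_le_iff.mpr (by omega))]
  rw [key]
  exact Ideal.mul_mem_right _ _ (X_mem_idealOf hiS)

lemma all_monomials_mem (I : Ideal (PolyC k)) (p : PolyC k)
    (h : ∀ μ ∈ p.support, (monomial μ (coeff μ p) : PolyC k) ∈ I) : p ∈ I := by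
  rw [as_sum p]
  exact Ideal.sum_mem _ fun μ hμ => h μ hμ

lemma flt_mul_eq_zero (r q : PolyC k) {S : Finset (Fin k)} (hq : flt S q = 0) :
    flt S (r * q) = 0 := by
  rw [flt_eq_zero_iff] at hq ⊢
  intro μ hμ
  by_contra hne
  have hsup : μ ∈ (r * q).support := mem_support_iff.mpr hne
  obtain ⟨a, ha, b, hb, hab⟩ := Finset.mem_add.mp (support_mul r q hsup)
  have hAb : Avoids S b := by
    intro i hi
    have h0 : μ i = 0 := hμ i hi
    rw [← hab] at h0
    rw [Finsupp.add_apply] at h0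
    omega
  exact (mem_support_iff.mp hb) (hq b hAb)

lemma sub_flt_mem (S : Finset (Fin k)) (p : PolyC k) : p - flt S p ∈ idealOf k S := by
  rw [flt, sub_fsel_mem]
  apply all_monomials_mem
  intro μ hμ
  have hnA : ¬ Avoids S μ := by
    by_contra hA
    apply mem_support_iff.mp hμ
    rw [coeff_fsel, if_neg (not_not_intro hA)]
  exact monomial_mem_idealOf hnA _

lemma mem_idealOf_iff {S : Finset (Fin k)} {p : PolyC k} :
    p ∈ idealOf k S ↔ flt S p = 0 := by
  constructor
  · intro h
    refine Submodule.span_induction ?_ ?_ ?_ ?_ h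
    · rintro x ⟨i, hi, rfl⟩
      rw [flt_eq_zero_iff]
      intro μ hμ
      rw [coeff_X']
      rw [if_neg]
      intro heq
      have h0 := hμ i (Finset.mem_coe.mp hi)
      rw [← heq, Finsupp.single_eq_same] at h0
      exact one_ne_zero h0
    · show flt S 0 = 0
      rw [flt_eq_zero_iff]
      intro μ _
      exact coeff_zero μ
    · intro x y _ _ ihx ihy
      show flt S (x + y) = 0
      rw [flt_eq_zero_iff] at ihx ihy ⊢
      intro μ hμ
      rw [coeff_add, ihx μ hμ, ihy μ hμ, add_zero]
    · intro a x _ ihx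
      rw [smul_eq_mul]
      exact flt_mul_eq_zero a x ihx
  · intro h
    have h2 := sub_flt_mem S p
    rw [h, sub_zero] at h2
    exact h2

/-- The exponent of `x₁⋯x_k`. -/
def uexp (k : ℕ) : Fin k →₀ ℕ := ∑ i : Fin k, Finsupp.single i 1

lemma uexp_apply (i : Fin k) : uexp k i = 1 := by
  rw [uexp, Finset.sum_apply']
  rw [Finset.sum_eq_single_of_mem i (Finset.mem_univ i)]
  · rw [Finsupp.single_eq_same]
  · intro b _ hbi
    exact Finsupp.single_eq_of_ne (Ne.symm hbi)

lemma prodX_eq : (∏ i : Fin k, (X i : PolyC k)) = monomial (uexp k) 1 := by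
  rw [uexp]
  induction (Finset.univ : Finset (Fin k)) using Finset.cons_induction with
  | empty => simp
  | cons a s ha ih =>
    rw [Finset.prod_cons, Finset.sum_cons, ih]
    have hX : (X a : PolyC k) = monomial (Finsupp.single a 1) 1 := rfl
    rw [hX, monomial_mul, one_mul]

lemma mem_prodIdeal_iff {p : PolyC k} :
    p ∈ prodIdeal k ↔ flt0 p = 0 := by
  constructor
  · intro hp
    rw [prodIdeal, Ideal.mem_span_singleton] at hp
    obtain ⟨q, rfl⟩ := hp
    rw [flt0, fsel_eq_zero_iff]
    intro μ hμ
    obtain ⟨i, hi⟩ := hμ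
    rw [prodX_eq, coeff_monomial_mul', if_neg]
    intro hle
    have h1 := Finsupp.le_def.mp hle i
    rw [uexp_apply] at h1
    omega
  · intro hf
    have hrest : p - flt0 p ∈ prodIdeal k := by
      rw [flt0, sub_fsel_mem]
      apply all_monomials_mem
      intro μ hμ
      have hfull : ¬ NotFull μ := by
        by_contra hNF
        apply mem_support_iff.mp hμ
        rw [coeff_fsel, if_neg (not_not_intro hNF)]
      rw [prodIdeal, Ideal.mem_span_singleton, prodX_eq]
      refine ⟨monomial (μ - uexp k) (coeff μ (fsel (fun μ => ¬ NotFull μ) p)), ?_⟩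
      rw [monomial_mul, one_mul, add_tsub_cancel_of_le ?_]
      rw [Finsupp.le_def]
      intro i
      rw [uexp_apply]
      have : μ i ≠ 0 := fun h0 => hfull ⟨i, h0⟩
      omega
    rwa [hf, sub_zero] at hrest

lemma mk_flt (S : Finset (Fin k)) (p : PolyC k) :
    Ideal.Quotient.mk (idealOf k S) (flt S p) = Ideal.Quotient.mk (idealOf k S) p := by
  rw [Ideal.Quotient.eq, ← neg_sub]
  exact (idealOf k S).neg_mem (sub_flt_mem S p)

lemma flt_flt (S : Finset (Fin k)) (p : PolyC k) : flt S (flt S p) = flt S p := by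
  apply MvPolynomial.ext
  intro μ
  simp only [flt, coeff_fsel]
  split_ifs <;> rfl

lemma flt_sub (S : Finset (Fin k)) (p q : PolyC k) :
    flt S (p - q) = flt S p - flt S q := by
  apply MvPolynomial.ext
  intro μ
  simp only [flt, coeff_sub, coeff_fsel]
  split_ifs with h
  · rfl
  · rw [sub_zero]

end Aux
section Aux2

open Finset

variable {k : ℕ}

/-- position of `a` in `A`, 1-based. -/
def pos (A : Finset (Fin k)) (a : Fin k) : ℕ := (A.filter fun b => b ≤ a).card

lemma newElemPos_erase {S' : Finset (Fin k)} {a : Fin k} (ha : a ∈ S') :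
    newElemPos (S'.erase a) S' = pos S' a := by
  rw [newElemPos, Finset.sdiff_erase_self ha, Finset.sum_singleton, pos]

lemma pos_insert_min {A : Finset (Fin k)} {v : Fin k} (hvA : v ∉ A)
    (hle : ∀ b ∈ A, v ≤ b) : pos (insert v A) v = 1 := by
  rw [pos]
  have h1 : (insert v A).filter (fun b => b ≤ v) = {v} := by
    ext b
    simp only [Finset.mem_filter, Finset.mem_insert, Finset.mem_singleton]
    constructor
    · rintro ⟨hb | hb, hbv⟩
      · exact hb
      · exact le_antisymm hbv (hle b hb)
    · rintro rfl
      exact ⟨Or.inl rfl, le_refl _⟩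
  rw [h1, Finset.card_singleton]

lemma pos_insert_of_mem {A : Finset (Fin k)} {v b : Fin k} (hb : b ∈ A) (hvA : v ∉ A)
    (hvb : v ≤ b) : pos (insert v A) b = pos A b + 1 := by
  rw [pos, pos, Finset.filter_insert, if_pos hvb,
    Finset.card_insert_of_notMem (fun h => hvA (Finset.mem_filter.mp h).1)]

lemma pos_erase_of_lt {S : Finset (Fin k)} {a b : Fin k} (hba : b < a) :
    pos (S.erase a) b = pos S b := by
  rw [pos, pos, Finset.filter_erase, Finset.erase_eq_of_notMem]
  intro h
  exact absurd (Finset.mem_filter.mp h).2 (not_le.mpr hba)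

lemma pos_erase_of_gt {S : Finset (Fin k)} {a b : Fin k} (ha : a ∈ S) (hb : b ∈ S)
    (hba : b < a) : pos (S.erase b) a + 1 = pos S a := by
  rw [pos, pos, Finset.filter_erase,
    Finset.card_erase_of_mem
      (show b ∈ S.filter (fun x => x ≤ a) from Finset.mem_filter.mpr ⟨hb, le_of_lt hba⟩)]
  have hpos : 0 < (S.filter fun x => x ≤ a).card :=
    Finset.card_pos.mpr ⟨a, Finset.mem_filter.mpr ⟨ha, le_refl a⟩⟩
  omega

/-- The polynomial-level differential. -/
def Dp (S' : Finset (Fin k)) (c : Finset (Fin k) → PolyC k) : PolyC k :=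
  ∑ a ∈ S', (-1 : PolyC k) ^ pos S' a * c (S'.erase a)

lemma compMap_mk {S S' : Finset (Fin k)} (h : S ⊆ S') (p : PolyC k) :
    compMap S S' (Ideal.Quotient.mk (idealOf k S) p) =
      Ideal.Quotient.mk (idealOf k S')
        ((-1 : PolyC k) ^ newElemPos S S' * p) := by
  rw [compMap, dif_pos h, map_mul, map_pow, map_neg, map_one]
  rfl

/-- Package a family of representatives into an element of `Cmod`. -/
def lamb (j : ℕ) (c : Finset (Fin k) → PolyC k) : Cmod k j :=
  fun S => Ideal.Quotient.mk (idealOf k S.1) (c S.1)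

lemma lamb_apply (j : ℕ) (c : Finset (Fin k) → PolyC k)
    (S : {S : Finset (Fin k) // S.card = j}) :
    lamb j c S = Ideal.Quotient.mk (idealOf k S.1) (c S.1) := rfl

lemma dstep_mk (j : ℕ) (c : Finset (Fin k) → PolyC k)
    (S' : {S : Finset (Fin k) // S.card = j + 1}) :
    dstep k j (lamb j c) S' =
      Ideal.Quotient.mk (idealOf k S'.1) (Dp S'.1 c) := by
  have hterm : ∀ S : {S : Finset (Fin k) // S.card = j},
      compMap S.1 S'.1 (Ideal.Quotient.mk (idealOf k S.1) (c S.1)) =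
        if S.1 ⊆ S'.1 then Ideal.Quotient.mk (idealOf k S'.1)
          ((-1 : PolyC k) ^ newElemPos S.1 S'.1 * c S.1) else 0 := by
    intro S
    by_cases h : S.1 ⊆ S'.1
    · rw [if_pos h, compMap_mk h]
    · rw [if_neg h, compMap, dif_neg h]
  show (∑ S : {S : Finset (Fin k) // S.card = j}, compMap S.1 S'.1
      (Ideal.Quotient.mk (idealOf k S.1) (c S.1))) = _
  rw [Finset.sum_congr rfl (fun S _ => hterm S), ← Finset.sum_filter, Dp, map_sum]
  refine (Finset.sum_bij (fun (a : Fin k) (ha : a ∈ S'.1) =>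
    (⟨S'.1.erase a, by rw [Finset.card_erase_of_mem ha, S'.2]; rfl⟩ :
      {S : Finset (Fin k) // S.card = j})) ?_ ?_ ?_ ?_).symm
  · intro a ha
    exact Finset.mem_filter.mpr ⟨Finset.mem_univ _, Finset.erase_subset a S'.1⟩
  · intro a₁ ha₁ a₂ ha₂ heq
    have h2 : S'.1.erase a₁ = S'.1.erase a₂ := congrArg Subtype.val heq
    exact (Finset.erase_inj S'.1 ha₁).mp h2
  · intro S hS
    have hsub : S.1 ⊆ S'.1 := (Finset.mem_filter.mp hS).2
    have hcd : (S'.1 \ S.1).card = 1 := by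
      rw [Finset.card_sdiff_of_subset hsub, S'.2, S.2]
      omega
    obtain ⟨a, ha⟩ := Finset.card_eq_one.mp hcd
    have haS' : a ∈ S'.1 := by
      have : a ∈ S'.1 \ S.1 := ha ▸ Finset.mem_singleton_self a
      exact (Finset.mem_sdiff.mp this).1
    have haS : a ∉ S.1 := by
      have : a ∈ S'.1 \ S.1 := ha ▸ Finset.mem_singleton_self a
      exact (Finset.mem_sdiff.mp this).2
    refine ⟨a, haS', Subtype.ext ?_⟩
    show S'.1.erase a = S.1
    refine (Finset.eq_of_subset_of_card_le ?_ ?_).symm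
    · intro x hx
      exact Finset.mem_erase.mpr ⟨fun hxa => haS (hxa ▸ hx), hsub hx⟩
    · rw [Finset.card_erase_of_mem haS', S'.2, S.2]
      omega
  · intro a ha
    rw [newElemPos_erase ha]

lemma erase_erase_comm (S : Finset (Fin k)) (a b : Fin k) :
    (S.erase a).erase b = (S.erase b).erase a := by
  ext x
  simp only [Finset.mem_erase]
  tauto

lemma DD (S'' : Finset (Fin k)) (c : Finset (Fin k) → PolyC k) :
    Dp S'' (fun T => Dp T c) = 0 := by
  have hexp : ∀ a ∈ S'', (-1 : PolyC k) ^ pos S'' a * Dp (S''.erase a) c =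
      ∑ b ∈ S''.erase a, (-1 : PolyC k) ^ (pos S'' a + pos (S''.erase a) b) *
        c ((S''.erase a).erase b) := by
    intro a _
    rw [Dp, Finset.mul_sum]
    refine Finset.sum_congr rfl fun b _ => ?_
    rw [← mul_assoc, ← pow_add]
  rw [Dp, Finset.sum_congr rfl hexp]
  have hprod : ∑ a ∈ S'', ∑ b ∈ S''.erase a, (-1 : PolyC k) ^ (pos S'' a + pos (S''.erase a) b) *
      c ((S''.erase a).erase b) =
    ∑ p ∈ (S'' ×ˢ S'').filter (fun p => p.2 ≠ p.1),
      (-1 : PolyC k) ^ (pos S'' p.1 + pos (S''.erase p.1) p.2) * c ((S''.erase p.1).erase p.2) := by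
    rw [Finset.sum_filter, Finset.sum_product]
    refine Finset.sum_congr rfl fun a _ => ?_
    rw [Finset.sum_ite, Finset.sum_const_zero, add_zero]
    refine Finset.sum_congr ?_ fun b _ => rfl
    ext b
    simp only [Finset.mem_filter, Finset.mem_erase]
    tauto
  rw [hprod]
  apply Finset.sum_involution (fun p _ => (p.2, p.1))
  · intro p hp
    have hmem := Finset.mem_filter.mp hp
    have h1 : p.1 ∈ S'' := (Finset.mem_product.mp hmem.1).1
    have h2 : p.2 ∈ S'' := (Finset.mem_product.mp hmem.1).2
    have hne : p.2 ≠ p.1 := hmem.2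
    have key : ∀ a b : Fin k, a ∈ S'' → b ∈ S'' → b < a →
        (-1 : PolyC k) ^ (pos S'' a + pos (S''.erase a) b) * c ((S''.erase a).erase b) +
        (-1 : PolyC k) ^ (pos S'' b + pos (S''.erase b) a) * c ((S''.erase b).erase a) = 0 := by
      intro a b haS hbS hba
      rw [erase_erase_comm S'' b a]
      rw [pos_erase_of_lt hba]
      have he2 : pos (S''.erase b) a + 1 = pos S'' a := pos_erase_of_gt haS hbS hba
      have hexp2 : pos S'' a + pos S'' b = (pos S'' b + pos (S''.erase b) a) + 1 := by omega
      rw [hexp2, pow_succ]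
      ring
    rcases lt_or_gt_of_ne hne with hlt | hgt
    · exact key p.1 p.2 h1 h2 hlt
    · have := key p.2 p.1 h2 h1 hgt
      rw [add_comm] at this
      exact this
  · intro p hp _
    have hne : p.2 ≠ p.1 := (Finset.mem_filter.mp hp).2
    intro heq
    exact hne (congrArg Prod.fst heq)
  · intro p hp
    have hmem := Finset.mem_filter.mp hp
    refine Finset.mem_filter.mpr ⟨?_, ?_⟩
    · have h1 := (Finset.mem_product.mp hmem.1).1
      have h2 := (Finset.mem_product.mp hmem.1).2
      exact Finset.mem_product.mpr ⟨h2, h1⟩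
    · exact fun h => hmem.2 h.symm
  · intro p hp
    rfl

end Aux2
section Aux3

open Finset

variable {k : ℕ}

/-- `a` is the least variable absent from `μ`. -/
def mnP (a : Fin k) (μ : Fin k →₀ ℕ) : Prop :=
  (Finset.univ \ μ.support).min = (a : WithTop (Fin k))

instance (a : Fin k) : DecidablePred (mnP a) :=
  fun μ => decidable_of_iff ((Finset.univ \ μ.support).min = (a : WithTop (Fin k))) Iff.rfl

lemma mnP_eq {a : Fin k} {μ : Fin k →₀ ℕ} (hm : mnP a μ)
    (h : (Finset.univ \ μ.support).Nonempty) : (Finset.univ \ μ.support).min' h = a := by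
  have h1 := Finset.coe_min' h
  rw [hm] at h1
  exact_mod_cast h1

lemma mnP_min' {μ : Fin k →₀ ℕ} (h : (Finset.univ \ μ.support).Nonempty) :
    mnP ((Finset.univ \ μ.support).min' h) μ := (Finset.coe_min' h).symm

/-- The contracting homotopy (middle degrees). -/
def y0 (c : Finset (Fin k) → PolyC k) (S : Finset (Fin k)) : PolyC k :=
  ∑ a ∈ Finset.univ \ S, (-1 : PolyC k) ^ pos (insert a S) a *
    fsel (fun μ => mnP a μ ∧ Avoids (insert a S) μ) (c (insert a S))

/-- The contracting homotopy (bottom degree). -/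
def y00 (c : Finset (Fin k) → PolyC k) : PolyC k :=
  ∑ a : Fin k, fsel (fun μ => mnP a μ ∧ Avoids {a} μ) (c {a})

lemma coeff_npow_mul (n : ℕ) (p : PolyC k) (μ : Fin k →₀ ℕ) :
    coeff μ ((-1 : PolyC k) ^ n * p) = (-1 : ℂ) ^ n * coeff μ p := by
  have h1 : ((-1 : PolyC k)) ^ n = C ((-1 : ℂ) ^ n) := by
    rw [map_pow, map_neg, map_one]
  rw [h1, coeff_C_mul]

lemma subset_compl_of_avoids {S : Finset (Fin k)} {μ : Fin k →₀ ℕ} (h : Avoids S μ) :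
    S ⊆ Finset.univ \ μ.support := fun i hi =>
  Finset.mem_sdiff.mpr ⟨Finset.mem_univ i, Finsupp.notMem_support_iff.mpr (h i hi)⟩

lemma coeff_y0 (c : Finset (Fin k) → PolyC k) (S : Finset (Fin k)) (μ : Fin k →₀ ℕ)
    (h : (Finset.univ \ μ.support).Nonempty) (hA : Avoids S μ) :
    coeff μ (y0 c S) =
      if (Finset.univ \ μ.support).min' h ∈ S then 0
      else (-1 : ℂ) ^ pos (insert ((Finset.univ \ μ.support).min' h) S)
          ((Finset.univ \ μ.support).min' h) *
        coeff μ (c (insert ((Finset.univ \ μ.support).min' h) S)) := by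
  set v := (Finset.univ \ μ.support).min' h with hvdef
  have hμv : μ v = 0 :=
    Finsupp.notMem_support_iff.mp (Finset.mem_sdiff.mp (Finset.min'_mem _ h)).2
  rw [y0, coeff_sum]
  by_cases hv : v ∈ S
  · rw [if_pos hv]
    apply Finset.sum_eq_zero
    intro a ha
    rw [coeff_npow_mul, coeff_fsel, if_neg, mul_zero]
    rintro ⟨hm, -⟩
    have hav : a = v := ((mnP_eq hm h).symm).trans rfl
    exact (Finset.mem_sdiff.mp ha).2 (hav ▸ hv)
  · rw [if_neg hv]
    rw [Finset.sum_eq_single_of_mem v (Finset.mem_sdiff.mpr ⟨Finset.mem_univ v, hv⟩)]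
    · rw [coeff_npow_mul, coeff_fsel, if_pos]
      refine ⟨mnP_min' h, ?_⟩
      intro i hi
      rcases Finset.mem_insert.mp hi with rfl | hi
      · exact hμv
      · exact hA i hi
    · intro b _ hbv
      rw [coeff_npow_mul, coeff_fsel, if_neg, mul_zero]
      rintro ⟨hm, -⟩
      exact hbv ((mnP_eq hm h).symm ▸ rfl)

lemma exact_middle (j : ℕ) (c : Finset (Fin k) → PolyC k)
    (hc : ∀ S' : Finset (Fin k), S'.card = j + 1 → flt S' (c S') = c S')
    (hz : ∀ S'' : Finset (Fin k), S''.card = j + 2 → flt S'' (Dp S'' c) = 0)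
    (S' : Finset (Fin k)) (hS' : S'.card = j + 1) :
    flt S' (Dp S' (y0 c)) = c S' := by
  apply MvPolynomial.ext
  intro μ
  rw [flt, coeff_fsel]
  by_cases hA : Avoids S' μ
  case neg =>
    rw [if_neg hA]
    have h2 := congrArg (coeff μ) (hc S' hS')
    rwa [flt, coeff_fsel, if_neg hA] at h2
  case pos =>
  rw [if_pos hA]
  have hsub : S' ⊆ Finset.univ \ μ.support := subset_compl_of_avoids hA
  have hS'ne : S'.Nonempty := Finset.card_pos.mp (by omega)
  have h : (Finset.univ \ μ.support).Nonempty := hS'ne.mono hsub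
  set v := (Finset.univ \ μ.support).min' h with hvdef
  have hvle : ∀ b ∈ S', v ≤ b := fun b hb => Finset.min'_le _ _ (hsub hb)
  have hμv : μ v = 0 :=
    Finsupp.notMem_support_iff.mp (Finset.mem_sdiff.mp (Finset.min'_mem _ h)).2
  rw [Dp, coeff_sum]
  have hterm : ∀ a ∈ S', coeff μ ((-1 : PolyC k) ^ pos S' a * y0 c (S'.erase a)) =
      if v ∈ S'.erase a then 0
      else (-1 : ℂ) ^ pos S' a * ((-1 : ℂ) ^ pos (insert v (S'.erase a)) v *
        coeff μ (c (insert v (S'.erase a)))) := by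
    intro a _
    have hAe : Avoids (S'.erase a) μ := fun i hi => hA i (Finset.mem_of_mem_erase hi)
    rw [coeff_npow_mul, coeff_y0 c _ μ h hAe]
    split_ifs with hm
    · rw [mul_zero]
    · rfl
  rw [Finset.sum_congr rfl hterm]
  by_cases hvS : v ∈ S'
  · rw [Finset.sum_eq_single_of_mem v hvS]
    · rw [if_neg (Finset.notMem_erase v S'), Finset.insert_erase hvS, ← mul_assoc, ← pow_add]
      rw [Even.neg_one_pow ⟨pos S' v, rfl⟩, one_mul]
    · intro b hb hbv
      rw [if_pos (Finset.mem_erase.mpr ⟨Ne.symm hbv, hvS⟩)]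
  · have hvS'' : (insert v S').card = j + 2 := by
      rw [Finset.card_insert_of_notMem hvS, hS']
    have hAins : Avoids (insert v S') μ := by
      intro i hi
      rcases Finset.mem_insert.mp hi with rfl | hi
      · exact hμv
      · exact hA i hi
    have h0μ : coeff μ (Dp (insert v S') c) = 0 := by
      have h0 := congrArg (coeff μ) (hz _ hvS'')
      rwa [flt, coeff_fsel, if_pos hAins, coeff_zero] at h0
    rw [Dp, coeff_sum, Finset.sum_insert hvS] at h0μ
    simp only [coeff_npow_mul] at h0μ
    rw [Finset.erase_insert hvS, pos_insert_min hvS hvle] at h0μ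
    have hsum2 : ∀ b ∈ S',
        (-1 : ℂ) ^ pos (insert v S') b * coeff μ (c ((insert v S').erase b)) =
        (-1 : ℂ) ^ pos S' b * ((-1 : ℂ) ^ pos (insert v (S'.erase b)) v *
          coeff μ (c (insert v (S'.erase b)))) := by
      intro b hb
      have hvb : v ≠ b := fun hvb => hvS (hvb ▸ hb)
      rw [Finset.erase_insert_of_ne hvb, pos_insert_of_mem hb hvS (hvle b hb),
        pos_insert_min (fun hmem => hvS (Finset.mem_of_mem_erase hmem))
          (fun b' hb' => hvle b' (Finset.mem_of_mem_erase hb'))]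
      ring
    rw [Finset.sum_congr rfl hsum2] at h0μ
    have hgoal2 : ∀ a ∈ S', (if v ∈ S'.erase a then (0 : ℂ)
        else (-1 : ℂ) ^ pos S' a * ((-1 : ℂ) ^ pos (insert v (S'.erase a)) v *
          coeff μ (c (insert v (S'.erase a))))) =
        (-1 : ℂ) ^ pos S' a * ((-1 : ℂ) ^ pos (insert v (S'.erase a)) v *
          coeff μ (c (insert v (S'.erase a)))) := by
      intro a _
      rw [if_neg (fun hmem => hvS (Finset.mem_of_mem_erase hmem))]
    rw [Finset.sum_congr rfl hgoal2]
    linear_combination h0μ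

lemma exact_one (c : Finset (Fin k) → PolyC k)
    (hc : ∀ S' : Finset (Fin k), S'.card = 1 → flt S' (c S') = c S')
    (hz : ∀ S'' : Finset (Fin k), S''.card = 2 → flt S'' (Dp S'' c) = 0)
    (i : Fin k) : flt {i} (y00 c) = c {i} := by
  apply MvPolynomial.ext
  intro μ
  rw [flt, coeff_fsel]
  by_cases hA : Avoids {i} μ
  case neg =>
    rw [if_neg hA]
    have h2 := congrArg (coeff μ) (hc {i} (Finset.card_singleton i))
    rwa [flt, coeff_fsel, if_neg hA] at h2
  case pos =>
  rw [if_pos hA]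
  have hiT : i ∈ Finset.univ \ μ.support :=
    Finset.mem_sdiff.mpr ⟨Finset.mem_univ i,
      Finsupp.notMem_support_iff.mpr (hA i (Finset.mem_singleton_self i))⟩
  have h : (Finset.univ \ μ.support).Nonempty := ⟨i, hiT⟩
  set v := (Finset.univ \ μ.support).min' h with hvdef
  have hμv : μ v = 0 :=
    Finsupp.notMem_support_iff.mp (Finset.mem_sdiff.mp (Finset.min'_mem _ h)).2
  have hvi : v ≤ i := Finset.min'_le _ _ hiT
  have hy : coeff μ (y00 c) = coeff μ (c {v}) := by
    rw [y00, coeff_sum, Finset.sum_eq_single_of_mem v (Finset.mem_univ v)]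
    · rw [coeff_fsel, if_pos]
      refine ⟨mnP_min' h, ?_⟩
      intro i' hi'
      rw [Finset.mem_singleton] at hi'
      rw [hi']
      exact hμv
    · intro b _ hbv
      rw [coeff_fsel, if_neg]
      rintro ⟨hm, -⟩
      exact hbv ((mnP_eq hm h).symm ▸ rfl)
  rw [hy]
  by_cases hvi' : v = i
  · rw [hvi']
  · have hvnm : v ∉ ({i} : Finset (Fin k)) := by
      rw [Finset.mem_singleton]; exact hvi'
    have h2 : (insert v {i} : Finset (Fin k)).card = 2 := by
      rw [Finset.card_insert_of_notMem hvnm, Finset.card_singleton]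
    have hAv : Avoids (insert v {i}) μ := by
      intro a ha
      rcases Finset.mem_insert.mp ha with rfl | ha
      · exact hμv
      · rw [Finset.mem_singleton] at ha
        rw [ha]
        exact hA i (Finset.mem_singleton_self i)
    have h0μ : coeff μ (Dp (insert v {i}) c) = 0 := by
      have h0 := congrArg (coeff μ) (hz _ h2)
      rwa [flt, coeff_fsel, if_pos hAv, coeff_zero] at h0
    rw [Dp, Finset.sum_insert hvnm, Finset.sum_singleton, coeff_add] at h0μ
    simp only [coeff_npow_mul] at h0μ
    rw [Finset.erase_insert hvnm] at h0μ
    have hev : (insert v ({i} : Finset (Fin k))).erase i = {v} := by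
      rw [Finset.erase_insert_of_ne hvi', Finset.erase_singleton]
      rfl
    rw [hev] at h0μ
    have hp1 : pos (insert v ({i} : Finset (Fin k))) v = 1 :=
      pos_insert_min hvnm (fun b hb => by
        rw [Finset.mem_singleton] at hb
        rw [hb]
        exact hvi)
    have hp2 : pos (insert v ({i} : Finset (Fin k))) i = 2 := by
      rw [pos_insert_of_mem (Finset.mem_singleton_self i) hvnm hvi]
      rw [pos, Finset.filter_singleton, if_pos (le_refl i), Finset.card_singleton]
    rw [hp1, hp2] at h0μ
    linear_combination h0μ

lemma rep_exists (j : ℕ) (x : Cmod k j) : ∃ c : Finset (Fin k) → PolyC k,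
    (∀ S', S'.card = j → flt S' (c S') = c S') ∧ x = lamb j c := by
  refine ⟨fun T => if h : T.card = j
      then flt T ((Ideal.Quotient.mk_surjective (x ⟨T, h⟩)).choose) else 0,
    fun S' h => by beta_reduce; rw [dif_pos h]; exact flt_flt _ _, funext fun S => ?_⟩
  rw [lamb_apply]
  beta_reduce
  rw [dif_pos S.2, mk_flt,
    (Ideal.Quotient.mk_surjective (x ⟨S.1, S.2⟩)).choose_spec]

lemma sum_sgn_two (S'' : Finset (Fin k)) (h : S''.card = 2) :
    ∑ a ∈ S'', (-1 : PolyC k) ^ pos S'' a = 0 := by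
  obtain ⟨u, w, huw, rfl⟩ := Finset.card_eq_two.mp h
  have key : ∀ u w : Fin k, u < w →
      ∑ a ∈ ({u, w} : Finset (Fin k)), (-1 : PolyC k) ^ pos {u, w} a = 0 := by
    intro u w huw
    have hun : u ∉ ({w} : Finset (Fin k)) := by
      rw [Finset.mem_singleton]; exact ne_of_lt huw
    rw [Finset.sum_insert hun, Finset.sum_singleton]
    have hp1 : pos ({u, w} : Finset (Fin k)) u = 1 :=
      pos_insert_min hun (fun b hb => by
        rw [Finset.mem_singleton] at hb; rw [hb]; exact le_of_lt huw)
    have hp2 : pos ({u, w} : Finset (Fin k)) w = 2 := by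
      rw [pos_insert_of_mem (Finset.mem_singleton_self w) hun (le_of_lt huw)]
      rw [pos, Finset.filter_singleton, if_pos (le_refl w), Finset.card_singleton]
    rw [hp1, hp2]
    norm_num
  rcases lt_or_gt_of_ne huw with hlt | hgt
  · exact key u w hlt
  · rw [Finset.pair_comm]
    exact key w u hgt

end Aux3
/-- The complex
`0 → R/(x₁⋯x_k) → ⊕_{|S|=1} R/I_S → ⊕_{|S|=2} R/I_S → ⋯ → R/I_{{1,…,k}} → 0`
is exact: the first map is injective, the kernel of each differential equals the image of
the previous map (the differential out of the top level being zero, so that the statement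
for `j + 1 = k` asserts surjectivity onto `R/I_{{1,…,k}}`). -/
theorem koszul_inclusion_exclusion_exact (k : ℕ) (hk : 1 ≤ k) :
    Function.Injective (dzero k) ∧
    (∀ x : Cmod k 1, dstep k 1 x = 0 ↔ ∃ y, dzero k y = x) ∧
    (∀ j : ℕ, 1 ≤ j → ∀ x : Cmod k (j + 1),
      dstep k (j + 1) x = 0 ↔ ∃ y : Cmod k j, dstep k j y = x) := by
  refine ⟨?_, ?_, ?_⟩
  · -- injectivity of `dzero`
    intro x y hxy
    obtain ⟨p, rfl⟩ := Ideal.Quotient.mk_surjective x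
    obtain ⟨q, rfl⟩ := Ideal.Quotient.mk_surjective y
    rw [Ideal.Quotient.eq, mem_prodIdeal_iff, flt0, fsel_eq_zero_iff]
    intro μ hμ
    obtain ⟨i, hi⟩ := hμ
    have h1 := congrFun hxy ⟨{i}, Finset.card_singleton i⟩
    simp only [dzero, Ideal.Quotient.factor_mk] at h1
    have h2 := mem_idealOf_iff.mp (Ideal.Quotient.eq.mp h1)
    refine flt_eq_zero_iff.mp h2 μ ?_
    intro i' hi'
    rw [Finset.mem_singleton] at hi'
    rw [hi']
    exact hi
  · -- exactness at level one
    intro x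
    constructor
    · intro hx0
      obtain ⟨c, hc, hxc⟩ := rep_exists 1 x
      have hz : ∀ S'' : Finset (Fin k), S''.card = 2 → flt S'' (Dp S'' c) = 0 := by
        intro S'' h2
        have h3 := congrFun hx0 ⟨S'', by omega⟩
        rw [hxc, dstep_mk, Pi.zero_apply] at h3
        exact mem_idealOf_iff.mp (Ideal.Quotient.eq_zero_iff_mem.mp h3)
      refine ⟨Ideal.Quotient.mk (prodIdeal k) (y00 c), ?_⟩
      funext S
      simp only [dzero, Ideal.Quotient.factor_mk]
      rw [hxc, lamb_apply]
      obtain ⟨i, hi⟩ := Finset.card_eq_one.mp S.2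
      rw [Ideal.Quotient.eq, mem_idealOf_iff, hi, flt_sub, exact_one c hc hz i,
        hc {i} (Finset.card_singleton i), sub_self]
    · rintro ⟨y, rfl⟩
      obtain ⟨q, rfl⟩ := Ideal.Quotient.mk_surjective y
      have hdz : dzero k (Ideal.Quotient.mk (prodIdeal k) q) = lamb 1 (fun _ => q) := by
        funext S
        simp only [dzero, Ideal.Quotient.factor_mk]
        rfl
      rw [hdz]
      funext S''
      rw [dstep_mk]
      have hDp : Dp S''.1 (fun _ => q) = 0 := by
        rw [Dp, ← Finset.sum_mul, sum_sgn_two S''.1 (by rw [S''.2]), zero_mul]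
      rw [hDp, map_zero]
      rfl
  · -- exactness in the middle and at the top
    intro j hj x
    constructor
    · intro hx0
      obtain ⟨c, hc, hxc⟩ := rep_exists (j + 1) x
      have hz : ∀ S'' : Finset (Fin k), S''.card = j + 2 → flt S'' (Dp S'' c) = 0 := by
        intro S'' h2
        have h3 := congrFun hx0 ⟨S'', by omega⟩
        rw [hxc, dstep_mk, Pi.zero_apply] at h3
        exact mem_idealOf_iff.mp (Ideal.Quotient.eq_zero_iff_mem.mp h3)
      refine ⟨lamb j (y0 c), ?_⟩
      funext S'
      rw [dstep_mk, hxc, lamb_apply, Ideal.Quotient.eq, mem_idealOf_iff, flt_sub,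
        exact_middle j c hc hz S'.1 S'.2, hc S'.1 S'.2, sub_self]
    · rintro ⟨y, rfl⟩
      obtain ⟨c, hc, hyc⟩ := rep_exists j y
      rw [hyc]
      have h1 : dstep k j (lamb j c) = lamb (j + 1) (fun T => Dp T c) := by
        funext S'
        rw [dstep_mk, lamb_apply]
      rw [h1]
      funext S''
      rw [dstep_mk, DD, map_zero]
      rfl

end
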